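/- Let G be an abelian group, R a G-graded ring, n ≥ 1, and σ ∈ Gⁿ. Then R is graded NR-clean if and only if the upper triangular matrix ring T_n(R) with the grading induced by σ is graded NR-clean. -/

import Mathlib

/-- An element is homogeneous w.r.t. a grading family `𝒜` if it lies in some component. -/
def Homogeneous {G : Type*} [Group G] {R : Type*} [Ring R]
    (𝒜 : G → AddSubgroup R) (x : R) : Prop := ∃ g, x ∈ 𝒜 g

/-- A graded-regular element: homogeneous `r` with `r = r * a * r` for some homogeneous `a`. -/
def GradedRegular {G : Type*} [Group G] {R : Type*} [Ring R]
    (𝒜 : G → AddSubgroup R) (r : R) : Prop :=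
  Homogeneous 𝒜 r ∧ ∃ a : R, Homogeneous 𝒜 a ∧ r = r * a * r

/-- Graded NR-clean: every homogeneous element is a sum of a graded-regular element
and a homogeneous nilpotent element. -/
def GradedNRClean {G : Type*} [Group G] {R : Type*} [Ring R]
    (𝒜 : G → AddSubgroup R) : Prop :=
  ∀ x : R, Homogeneous 𝒜 x →
    ∃ r n : R, GradedRegular 𝒜 r ∧ Homogeneous 𝒜 n ∧ IsNilpotent n ∧ x = r + n

/-- `𝒜` is a `G`-grading of the ring `R`. -/
structure IsGrading {G : Type*} [Group G] [DecidableEq G] {R : Type*} [Ring R]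
    (𝒜 : G → AddSubgroup R) : Prop where
  one_mem : (1 : R) ∈ 𝒜 1
  mul_mem : ∀ {g h : G} {a b : R}, a ∈ 𝒜 g → b ∈ 𝒜 h → a * b ∈ 𝒜 (g * h)
  isInternal : DirectSum.IsInternal 𝒜

/-- The subring of upper triangular `n × n` matrices over `R`. -/
def upperTriangularSubring (R : Type*) [Ring R] (n : ℕ) :
    Subring (Matrix (Fin n) (Fin n) R) where
  carrier := {M | ∀ i j : Fin n, j < i → M i j = 0}
  zero_mem' := fun i j _ => rfl
  one_mem' := fun i j hij => Matrix.one_apply_ne (by exact fun h => absurd h (by rintro rfl; exact lt_irrefl _ hij))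
  add_mem' := fun {a b} ha hb i j hij => by
    show a i j + b i j = 0
    rw [ha i j hij, hb i j hij, add_zero]
  neg_mem' := fun {a} ha i j hij => by
    show -a i j = 0
    rw [ha i j hij, neg_zero]
  mul_mem' := fun {a b} ha hb i j hij => by
    rw [Matrix.mul_apply]
    apply Finset.sum_eq_zero
    intro k _
    rcases lt_or_ge j k with hk | hk
    · rw [hb k j hk, mul_zero]
    · rw [ha i k (lt_of_le_of_lt hk hij), zero_mul]

/-- The `g`-th component of the grading on `T_n(R)` induced by `σ ∈ Gⁿ`:
matrices whose `(i,j)` entry has degree `σ i * g * (σ j)⁻¹`. -/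
def utComponent {G : Type*} [Group G] {R : Type*} [Ring R]
    (𝒜 : G → AddSubgroup R) {n : ℕ} (σ : Fin n → G) (g : G) :
    AddSubgroup (upperTriangularSubring R n) where
  carrier := {M | ∀ i j : Fin n, (M : Matrix (Fin n) (Fin n) R) i j ∈ 𝒜 (σ i * g * (σ j)⁻¹)}
  zero_mem' := fun i j => by
    show ((0 : Matrix (Fin n) (Fin n) R)) i j ∈ _
    simpa using zero_mem (𝒜 (σ i * g * (σ j)⁻¹))
  add_mem' := fun {a b} ha hb i j => by
    show ((a : Matrix (Fin n) (Fin n) R) + b) i j ∈ _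
    exact add_mem (ha i j) (hb i j)
  neg_mem' := fun {a} ha i j => by
    show (-(a : Matrix (Fin n) (Fin n) R)) i j ∈ _
    exact neg_mem (ha i j)

section Aux
variable {G : Type*} [Group G] [DecidableEq G] {R : Type*} [Ring R] {𝒜 : G → AddSubgroup R}

lemma grading_disjoint (hI : DirectSum.IsInternal 𝒜) {g h : G} (hgh : g ≠ h)
    {x : R} (hxg : x ∈ 𝒜 g) (hxh : x ∈ 𝒜 h) : x = 0 := by
  have h0 : (DirectSum.coeAddMonoidHom 𝒜)
      (DirectSum.of (fun i => 𝒜 i) g ⟨x, hxg⟩ - DirectSum.of (fun i => 𝒜 i) h ⟨x, hxh⟩) = 0 := by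
    simp [map_sub, DirectSum.coeAddMonoidHom_of]
  have := hI.injective (a₂ := 0) (by rw [h0, map_zero])
  have h2 := congrArg (fun v => (v g : R)) this
  simpa [DirectSum.sub_apply, DirectSum.of_eq_same, DirectSum.of_eq_of_ne h g _ hgh] using h2

lemma grading_same (hI : DirectSum.IsInternal 𝒜) {g h : G}
    {x : R} (hx0 : x ≠ 0) (hxg : x ∈ 𝒜 g) (hxh : x ∈ 𝒜 h) : g = h := by
  by_contra hgh
  exact hx0 (grading_disjoint hI hgh hxg hxh)

lemma grading_three (hI : DirectSum.IsInternal 𝒜) {g h k : G} (hgh : g ≠ h) (hkg : k ≠ g) (hkh : k ≠ h)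
    {r s x : R} (hr : r ∈ 𝒜 g) (hs : s ∈ 𝒜 h) (hx : x ∈ 𝒜 k) (heq : x = r + s) :
    x = 0 ∧ r = 0 ∧ s = 0 := by
  set u : DirectSum G (fun i => 𝒜 i) :=
    DirectSum.of (fun i => 𝒜 i) g ⟨r, hr⟩ + DirectSum.of (fun i => 𝒜 i) h ⟨s, hs⟩
      - DirectSum.of (fun i => 𝒜 i) k ⟨x, hx⟩ with hu
  have h0 : (DirectSum.coeAddMonoidHom 𝒜) u = 0 := by
    simp [hu, map_sub, map_add, DirectSum.coeAddMonoidHom_of, heq]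
  have hu0 : u = 0 := hI.injective (a₂ := 0) (by rw [h0, map_zero])
  have hrg := congrArg (fun v => (v g : R)) hu0
  have hsh := congrArg (fun v => (v h : R)) hu0
  have hxk := congrArg (fun v => (v k : R)) hu0
  simp only [hu, DirectSum.sub_apply, DirectSum.add_apply, DirectSum.of_eq_same,
    DirectSum.of_eq_of_ne _ _ _ hgh, DirectSum.of_eq_of_ne _ _ _ (Ne.symm hgh),
    DirectSum.of_eq_of_ne _ _ _ hkg, DirectSum.of_eq_of_ne _ _ _ hkh,
    DirectSum.of_eq_of_ne _ _ _ (Ne.symm hkg), DirectSum.of_eq_of_ne _ _ _ (Ne.symm hkh)] at hrg hsh hxk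
  refine ⟨by simpa using hxk, by simpa using hrg, by simpa using hsh⟩

/-- Fix the degree of the quasi-inverse witness. -/
lemma adjust_a (hG : IsGrading 𝒜) {d : G} {r : R} (hrd : r ∈ 𝒜 d)
    (hreg : ∃ a : R, Homogeneous 𝒜 a ∧ r = r * a * r) :
    ∃ a : R, a ∈ 𝒜 d⁻¹ ∧ r = r * a * r := by
  by_cases hr0 : r = 0
  · exact ⟨0, zero_mem _, by rw [hr0, zero_mul, zero_mul]⟩
  · obtain ⟨a, ⟨e, hae⟩, hrar⟩ := hreg
    have hmem : r * a * r ∈ 𝒜 (d * e * d) := hG.mul_mem (hG.mul_mem hrd hae) hrd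
    rw [← hrar] at hmem
    have hde : d = d * e * d := grading_same hG.isInternal hr0 hrd hmem
    have he : e = d⁻¹ := by
      have h2 := congrArg (fun t => d⁻¹ * t * d⁻¹) hde
      simp only [mul_assoc, inv_mul_cancel_left, mul_inv_cancel, mul_one] at h2
      exact h2.symm
    exact ⟨a, he ▸ hae, hrar⟩

/-- Key: in a graded NR-clean ring, decompositions can be found within the component. -/
lemma key (hG : IsGrading 𝒜) (hC : GradedNRClean 𝒜) (d : G) {x : R} (hx : x ∈ 𝒜 d) :
    ∃ r a nn : R, r ∈ 𝒜 d ∧ a ∈ 𝒜 d⁻¹ ∧ r = r * a * r ∧ nn ∈ 𝒜 d ∧ IsNilpotent nn ∧ x = r + nn := by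
  obtain ⟨r, nn, ⟨⟨h1, hr1⟩, hreg⟩, ⟨h2, hn2⟩, hnil, hsum⟩ := hC x ⟨d, hx⟩
  by_cases hr0 : r = 0
  · rw [hr0, zero_add] at hsum
    exact ⟨0, 0, x, zero_mem _, zero_mem _, by simp, hx, hsum ▸ hnil, (zero_add x).symm⟩
  by_cases hn0 : nn = 0
  · rw [hn0, add_zero] at hsum
    subst hsum
    obtain ⟨a, ha, hrar⟩ := adjust_a hG hx hreg
    exact ⟨x, a, 0, hx, ha, hrar, zero_mem _, IsNilpotent.zero, (add_zero x).symm⟩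
  by_cases h12 : h1 = h2
  · subst h12
    by_cases hx0 : x = 0
    · exact ⟨0, 0, 0, zero_mem _, zero_mem _, by simp, zero_mem _, IsNilpotent.zero,
        by rw [hx0, add_zero]⟩
    · have hxh1 : x ∈ 𝒜 h1 := hsum ▸ add_mem hr1 hn2
      have hd : h1 = d := grading_same hG.isInternal hx0 hxh1 hx
      subst hd
      obtain ⟨a, ha, hrar⟩ := adjust_a hG hr1 hreg
      exact ⟨r, a, nn, hr1, ha, hrar, hn2, hnil, hsum⟩
  by_cases hd1 : d = h1
  · subst hd1
    have : nn ∈ 𝒜 d := by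
      have : nn = x - r := by rw [hsum, add_sub_cancel_left]
      rw [this]; exact sub_mem hx hr1
    exact absurd (grading_disjoint hG.isInternal (Ne.symm h12) hn2 this) hn0
  by_cases hd2 : d = h2
  · subst hd2
    have : r ∈ 𝒜 d := by
      have : r = x - nn := by rw [hsum, add_sub_cancel_right]
      rw [this]; exact sub_mem hx hn2
    exact absurd (grading_disjoint hG.isInternal h12 hr1 this) hr0
  · obtain ⟨-, hre, -⟩ := grading_three hG.isInternal h12 hd1 hd2 hr1 hn2 hx hsum
    exact absurd hre hr0

section MatrixBand
variable {S : Type*} [Ring S] {m : ℕ}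

/-- entries vanish below the `k`-th superdiagonal -/
def BandZero (k : ℕ) (M : Matrix (Fin m) (Fin m) S) : Prop :=
  ∀ i j : Fin m, (j : ℕ) < (i : ℕ) + k → M i j = 0

lemma BandZero.add {a : ℕ} {M N : Matrix (Fin m) (Fin m) S}
    (hM : BandZero a M) (hN : BandZero a N) : BandZero a (M + N) := by
  intro i j hij
  show M i j + N i j = 0
  rw [hM i j hij, hN i j hij, add_zero]

lemma BandZero.mul {a b : ℕ} {M N : Matrix (Fin m) (Fin m) S}
    (hM : BandZero a M) (hN : BandZero b N) : BandZero (a + b) (M * N) := by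
  intro i j hij
  rw [Matrix.mul_apply]
  apply Finset.sum_eq_zero
  intro k _
  rcases lt_or_ge (k : ℕ) ((i : ℕ) + a) with hk | hk
  · rw [hM i k hk, zero_mul]
  · rw [hN k j (by omega), mul_zero]

lemma BandZero.eq_zero {M : Matrix (Fin m) (Fin m) S} (h : BandZero m M) : M = 0 := by
  ext i j
  exact h i j (lt_of_lt_of_le j.isLt (Nat.le_add_left m i))

lemma BandZero.one : BandZero 0 (1 : Matrix (Fin m) (Fin m) S) := by
  intro i j hij
  exact Matrix.one_apply_ne (by rintro rfl; omega)

lemma BandZero.diagonal (v : Fin m → S) : BandZero 0 (Matrix.diagonal v) := by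
  intro i j hij
  exact Matrix.diagonal_apply_ne' v (by rintro rfl; omega)

lemma BandZero.pow {N : Matrix (Fin m) (Fin m) S} (hN : BandZero 1 N) :
    ∀ k : ℕ, BandZero k (N ^ k)
  | 0 => by rw [pow_zero]; exact BandZero.one
  | (k + 1) => by
      rw [pow_succ]
      exact (BandZero.pow hN k).mul hN

lemma band_pow_sub {M : Matrix (Fin m) (Fin m) S} (hM : BandZero 0 M) (k : ℕ) :
    BandZero 1 (M ^ k - (Matrix.diagonal fun i => M i i) ^ k) := by
  induction k with
  | zero =>
      intro i j _
      show ((M ^ 0 - _ ^ 0) : Matrix (Fin m) (Fin m) S) i j = 0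
      rw [pow_zero, pow_zero, sub_self]
      rfl
  | succ k ih =>
      set d := Matrix.diagonal fun i => M i i with hd
      have hsub : BandZero 1 (M - d) := by
        intro i j hij
        show M i j - d i j = 0
        rcases eq_or_ne i j with rfl | hne
        · rw [hd, Matrix.diagonal_apply_eq, sub_self]
        · have hji : (j : ℕ) < (i : ℕ) := by
            rcases Nat.lt_or_ge (j : ℕ) (i : ℕ) with h | h
            · exact h
            · exfalso; have : (i : ℕ) = (j : ℕ) := by omega
              exact hne (Fin.ext this)
          rw [hM i j (by omega), hd, Matrix.diagonal_apply_ne' _ (by rintro rfl; omega), sub_zero]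
      have key : M ^ (k+1) - d ^ (k+1) = M * (M ^ k - d ^ k) + (M - d) * d ^ k := by
        rw [mul_sub, sub_mul, pow_succ', pow_succ']
        abel
      rw [key]
      have h1 : BandZero 1 (M * (M ^ k - d ^ k)) := by
        have := hM.mul ih; simpa using this
      have h2 : BandZero 1 ((M - d) * d ^ k) := by
        have hdk : BandZero 0 (d ^ k) := by
          rw [hd, Matrix.diagonal_pow]; exact BandZero.diagonal _
        have := hsub.mul hdk; simpa using this
      exact h1.add h2

lemma upper_tri_nilpotent {M : Matrix (Fin m) (Fin m) S} (hM : BandZero 0 M)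
    (hdiag : ∀ i, IsNilpotent (M i i)) : IsNilpotent M := by
  choose k hk using hdiag
  set K := (Finset.univ.sum k) + 1 with hK
  have hKi : ∀ i, (M i i) ^ K = 0 := by
    intro i
    have hle : k i ≤ K := le_trans
      (Finset.single_le_sum (fun _ _ => Nat.zero_le _) (Finset.mem_univ i)) (Nat.le_succ _)
    calc (M i i) ^ K = (M i i) ^ (K - k i) * (M i i) ^ (k i) := by
          rw [← pow_add]; congr 1; omega
      _ = 0 := by rw [hk i, mul_zero]
  have hdK : (Matrix.diagonal fun i => M i i) ^ K = 0 := by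
    rw [Matrix.diagonal_pow]
    have : ((fun i => M i i) ^ K) = (0 : Fin m → S) := by
      funext i; rw [Pi.pow_apply, hKi i]; rfl
    rw [this]
    exact Matrix.diagonal_zero
  have h1 : BandZero 1 (M ^ K) := by
    have := band_pow_sub hM K
    rw [hdK, sub_zero] at this
    exact this
  refine ⟨K * m, ?_⟩
  rw [pow_mul]
  exact (h1.pow m).eq_zero

end MatrixBand

section Corner
variable {S : Type*} [Ring S] {m : ℕ}

lemma corner_mul (i0 : Fin m) (h0 : ∀ k : Fin m, k ≠ i0 → i0 < k)
    (P Q : Matrix (Fin m) (Fin m) S) (hQ : ∀ i j : Fin m, j < i → Q i j = 0) :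
    (P * Q) i0 i0 = P i0 i0 * Q i0 i0 := by
  rw [Matrix.mul_apply]
  apply Finset.sum_eq_single i0
  · intro k _ hk
    rw [hQ k i0 (h0 k hk), mul_zero]
  · intro h; exact absurd (Finset.mem_univ i0) h

lemma corner_pow (i0 : Fin m) (h0 : ∀ k : Fin m, k ≠ i0 → i0 < k)
    (M : Matrix (Fin m) (Fin m) S) (hM : ∀ i j : Fin m, j < i → M i j = 0) :
    ∀ k : ℕ, (M ^ k) i0 i0 = (M i0 i0) ^ k
  | 0 => by rw [pow_zero, pow_zero, Matrix.one_apply_eq]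
  | (k + 1) => by
      rw [pow_succ, pow_succ, corner_mul i0 h0 _ _ hM, corner_pow i0 h0 M hM k]

end Corner

end Aux

/-- For `G` abelian, `n ≥ 1` and `σ ∈ Gⁿ`, the ring `R` is graded NR-clean
iff the upper triangular matrix ring `T_n(R)(σ)` is graded NR-clean. -/
theorem stmt11 {G : Type*} [CommGroup G] [DecidableEq G] {R : Type*} [Ring R]
    (𝒜 : G → AddSubgroup R) (hG : IsGrading 𝒜)
    {n : ℕ} (hn : 1 ≤ n) (σ : Fin n → G) :
    GradedNRClean 𝒜 ↔ GradedNRClean (utComponent 𝒜 σ) := by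
  constructor
  · -- R graded NR-clean → T_n(R) graded NR-clean
    intro hclean M hMhom
    obtain ⟨g, hMg⟩ := hMhom
    choose r a nn hr ha hrar hnn hnil hsum using
      fun i : Fin n => key hG hclean (σ i * g * (σ i)⁻¹) (hMg i i)
    set Rm : upperTriangularSubring R n :=
      ⟨Matrix.diagonal r, fun i j hij => Matrix.diagonal_apply_ne' r (ne_of_lt hij)⟩ with hRmdef
    set Am : upperTriangularSubring R n :=
      ⟨Matrix.diagonal a, fun i j hij => Matrix.diagonal_apply_ne' a (ne_of_lt hij)⟩ with hAmdef
    refine ⟨Rm, M - Rm, ⟨⟨g, ?_⟩, Am, ⟨g⁻¹, ?_⟩, ?_⟩, ⟨g, ?_⟩, ?_, by abel⟩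
    · intro i j
      show Matrix.diagonal r i j ∈ _
      rcases eq_or_ne i j with rfl | hne
      · rw [Matrix.diagonal_apply_eq]; exact hr i
      · rw [Matrix.diagonal_apply_ne _ hne]; exact zero_mem _
    · intro i j
      show Matrix.diagonal a i j ∈ _
      rcases eq_or_ne i j with rfl | hne
      · rw [Matrix.diagonal_apply_eq]
        have hgrp : σ i * g⁻¹ * (σ i)⁻¹ = (σ i * g * (σ i)⁻¹)⁻¹ := by group
        rw [hgrp]; exact ha i
      · rw [Matrix.diagonal_apply_ne _ hne]; exact zero_mem _
    · apply Subtype.ext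
      show Matrix.diagonal r = Matrix.diagonal r * Matrix.diagonal a * Matrix.diagonal r
      rw [Matrix.diagonal_mul_diagonal, Matrix.diagonal_mul_diagonal]
      have hfun : (fun i => r i * a i * r i) = r := funext fun i => (hrar i).symm
      rw [hfun]
    · intro i j
      show ((M : Matrix (Fin n) (Fin n) R) - Matrix.diagonal r) i j ∈ _
      rw [Matrix.sub_apply]
      rcases eq_or_ne i j with rfl | hne
      · rw [Matrix.diagonal_apply_eq]
        have hni : (M : Matrix (Fin n) (Fin n) R) i i - r i = nn i := by
          rw [hsum i, add_sub_cancel_left]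
        rw [hni]; exact hnn i
      · rw [Matrix.diagonal_apply_ne _ hne, sub_zero]; exact hMg i j
    · have hut : BandZero 0 ((M : Matrix (Fin n) (Fin n) R) - Matrix.diagonal r) := by
        intro i j hij
        have hij' : j < i := Fin.lt_def.mpr (by omega)
        rw [Matrix.sub_apply, M.2 i j hij',
          Matrix.diagonal_apply_ne' r (ne_of_lt hij'), sub_zero]
      have hnilM : IsNilpotent ((M : Matrix (Fin n) (Fin n) R) - Matrix.diagonal r) := by
        apply upper_tri_nilpotent hut
        intro i
        rw [Matrix.sub_apply, Matrix.diagonal_apply_eq]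
        have hni : (M : Matrix (Fin n) (Fin n) R) i i - r i = nn i := by
          rw [hsum i, add_sub_cancel_left]
        rw [hni]; exact hnil i
      obtain ⟨K, hK⟩ := hnilM
      refine ⟨K, ?_⟩
      apply Subtype.ext
      have hcoe : (((M - Rm) ^ K : upperTriangularSubring R n) : Matrix (Fin n) (Fin n) R)
          = ((M : Matrix (Fin n) (Fin n) R) - Matrix.diagonal r) ^ K := by
        push_cast
        rfl
      rw [hcoe]
      exact hK
  · -- T_n(R) graded NR-clean → R graded NR-clean
    intro hT x hxhom
    obtain ⟨g, hxg⟩ := hxhom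
    set i0 : Fin n := ⟨0, hn⟩ with hi0
    have hmin : ∀ k : Fin n, k ≠ i0 → i0 < k := by
      intro k hk
      rw [Fin.lt_def]
      have hzero : (k : ℕ) ≠ 0 := fun h => hk (Fin.ext h)
      simpa [hi0] using Nat.pos_of_ne_zero hzero
    set Mmat : Matrix (Fin n) (Fin n) R := Matrix.single i0 i0 x with hMmatdef
    have hMut : Mmat ∈ upperTriangularSubring R n := by
      intro i j hij
      apply Matrix.single_apply_of_ne
      rintro ⟨rfl, rfl⟩
      exact lt_irrefl _ hij
    have hMcomp : (⟨Mmat, hMut⟩ : upperTriangularSubring R n) ∈ utComponent 𝒜 σ g := by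
      intro i j
      show Mmat i j ∈ _
      by_cases hij : i = i0 ∧ j = i0
      · obtain ⟨h1, h2⟩ := hij
        subst h1; subst h2
        rw [hMmatdef, Matrix.single_apply_same]
        have hgg : σ i0 * g * (σ i0)⁻¹ = g := by
          rw [mul_comm (σ i0) g, mul_inv_cancel_right]
        rw [hgg]; exact hxg
      · rw [hMmatdef, Matrix.single_apply_of_ne
          (h := fun hc : i0 = i ∧ i0 = j => hij ⟨hc.1.symm, hc.2.symm⟩)]
        exact zero_mem _
    obtain ⟨Rm, Nm, ⟨⟨h, hRm⟩, Am, ⟨e, hAm⟩, hRAR⟩, ⟨h2, hNm⟩, ⟨K, hNK⟩, hMeq⟩ :=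
      hT _ ⟨g, hMcomp⟩
    refine ⟨(Rm : Matrix (Fin n) (Fin n) R) i0 i0, (Nm : Matrix (Fin n) (Fin n) R) i0 i0,
      ⟨⟨_, hRm i0 i0⟩, (Am : Matrix (Fin n) (Fin n) R) i0 i0, ⟨_, hAm i0 i0⟩, ?_⟩,
      ⟨_, hNm i0 i0⟩, ⟨K, ?_⟩, ?_⟩
    · have hc := congrArg
        (fun P : upperTriangularSubring R n => (P : Matrix (Fin n) (Fin n) R) i0 i0) hRAR
      rw [show ((Rm * Am * Rm : upperTriangularSubring R n) : Matrix (Fin n) (Fin n) R)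
        = (Rm : Matrix (Fin n) (Fin n) R) * Am * Rm from rfl] at hc
      rw [corner_mul i0 hmin _ _ Rm.2, corner_mul i0 hmin _ _ Am.2] at hc
      exact hc
    · have hcoe : ((Nm ^ K : upperTriangularSubring R n) : Matrix (Fin n) (Fin n) R)
          = (Nm : Matrix (Fin n) (Fin n) R) ^ K := by push_cast; rfl
      have hz : ((Nm : Matrix (Fin n) (Fin n) R)) ^ K = 0 := by
        rw [← hcoe, hNK]; rfl
      rw [← corner_pow i0 hmin _ Nm.2 K, hz]
      rfl
    · have hc := congrArg
        (fun P : upperTriangularSubring R n => (P : Matrix (Fin n) (Fin n) R) i0 i0) hMeq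
      simpa [hMmatdef, Matrix.single_apply_same] using hc
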